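/- Let q be a prime power, let m > 1 be an integer with smallest prime divisor m₁. Suppose there exists a polynomial ψ(x) ∈ F_q[x] with deg ψ = m₁ which fails restricted injectivity on 𝓕_m(q), i.e., there exist α ∈ 𝓕_m(q) and an integer k with ψ(σ^k(α)) = ψ(α) and σ^k(α) ≠ α. Then there exist α ∈ 𝓕_m(q) and c₁, …, c_{m₁−1} ∈ F_q such that α^{m₁} + Σ_{i=1}^{m₁−1} c_i α^i ∈ 𝓕_{m/m₁}(q). -/

import Mathlib

open Polynomial

/-- `Fcal q m` is the set `𝓕_m(q)` of elements generating `𝔽_{q^m}` over `𝔽_q`. -/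
def Fcal (q m : ℕ) {K : Type*} [Monoid K] : Set K :=
  {α | α ^ q ^ m = α ∧ ∀ l : ℕ, 0 < l → α ^ q ^ l = α → m ∣ l}

section Helpers

variable {F K : Type*} [Field F] [Field K] [Algebra F K]

lemma pow_apply' (q : ℕ) (σ : K ≃ₐ[F] K) (hσ : ∀ x, σ x = x ^ q) (l : ℕ) (x : K) :
    (σ ^ l) x = x ^ q ^ l := by
  induction l with
  | zero => simp
  | succ n ih =>
    rw [pow_succ', AlgEquiv.mul_apply, ih, hσ, ← pow_mul, pow_succ]

lemma fix_inv (τ : K ≃ₐ[F] K) (x : K) (h : τ x = x) : τ⁻¹ x = x := by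
  calc τ⁻¹ x = τ⁻¹ (τ x) := by rw [h]
  _ = x := τ.symm_apply_apply x

lemma fix_zpow (τ : K ≃ₐ[F] K) (x : K) (h : τ x = x) : ∀ s : ℤ, (τ ^ s) x = x := by
  have hn : ∀ (ρ : K ≃ₐ[F] K), ρ x = x → ∀ n : ℕ, (ρ ^ n) x = x := by
    intro ρ hρ n
    induction n with
    | zero => simp
    | succ n ih => rw [pow_succ, AlgEquiv.mul_apply, hρ, ih]
  intro s
  rcases s with n | n
  · rw [Int.ofNat_eq_natCast, zpow_natCast]; exact hn τ h n
  · rw [Int.negSucc_eq]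
    have hc : (-((n:ℤ) + 1)) = -((n + 1 : ℕ) : ℤ) := by push_cast; ring
    rw [hc, zpow_neg, zpow_natCast]
    exact fix_inv _ x (hn τ h (n+1))

lemma exists_char (σ : K ≃ₐ[F] K) (x : K)
    (h : ∃ l : ℕ, 0 < l ∧ (σ ^ (l : ℤ)) x = x) :
    ∃ d : ℕ, 0 < d ∧ (∀ l : ℤ, (σ ^ l) x = x ↔ (d : ℤ) ∣ l) := by
  classical
  obtain ⟨hdpos, hdfix⟩ := Nat.find_spec h
  set d := Nat.find h with hd
  refine ⟨d, hdpos, fun l => ⟨fun hl => ?_, fun hl => ?_⟩⟩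
  · set r := l % (d : ℤ) with hr
    have hr0 : 0 ≤ r := Int.emod_nonneg l (by exact_mod_cast hdpos.ne')
    have hrlt : r < d := Int.emod_lt_of_pos l (by exact_mod_cast hdpos)
    have hmul : (σ ^ ((d : ℤ) * (l / (d : ℤ)))) x = x := by
      rw [zpow_mul]
      exact fix_zpow _ x hdfix _
    have hrfix : (σ ^ r) x = x := by
      have he : r = l - (d : ℤ) * (l / (d : ℤ)) := Int.emod_def l d
      rw [he, sub_eq_add_neg, zpow_add, AlgEquiv.mul_apply, zpow_neg,
        fix_inv _ x hmul, hl]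
    by_contra hdvd
    have hrne : r ≠ 0 := fun h0 => hdvd (Int.dvd_of_emod_eq_zero h0)
    have h1 : 0 < r.toNat := by omega
    have h2 : r.toNat < d := by omega
    have h3 : (σ ^ ((r.toNat : ℕ) : ℤ)) x = x := by
      rwa [Int.toNat_of_nonneg hr0]
    exact Nat.find_min h h2 ⟨h1, h3⟩
  · obtain ⟨s, rfl⟩ := hl
    rw [zpow_mul]
    exact fix_zpow _ x hdfix _

end Helpers

/-- (Proposition, (ii) ⟹ (iii).)  If there is `ψ(x) ∈ 𝔽_q[x]` with `deg ψ = m₁`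
(`m₁` the smallest prime divisor of `m > 1`) failing restricted injectivity on
`𝓕_m(q)`, then there are `α ∈ 𝓕_m(q)` and `c₁, …, c_{m₁-1} ∈ 𝔽_q` with
`α^{m₁} + Σ_{i=1}^{m₁-1} c_i α^i ∈ 𝓕_{m/m₁}(q)`. -/
theorem stmt_14 {F : Type*} [Field F] [Fintype F] (q : ℕ) (hq : Fintype.card F = q)
    (σ : AlgebraicClosure F ≃ₐ[F] AlgebraicClosure F) (hσ : ∀ x, σ x = x ^ q)
    (m m₁ : ℕ) (hm : 1 < m) (hm₁ : m₁ = m.minFac)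
    (ψ : Polynomial F) (hdeg : ψ.natDegree = m₁)
    (α₀ : AlgebraicClosure F) (hα₀ : α₀ ∈ (Fcal q m : Set (AlgebraicClosure F)))
    (k : ℤ) (hfail : Polynomial.aeval ((σ ^ k) α₀) ψ = Polynomial.aeval α₀ ψ)
    (hne : (σ ^ k) α₀ ≠ α₀) :
    ∃ α ∈ (Fcal q m : Set (AlgebraicClosure F)), ∃ c : ℕ → F,
      α ^ m₁ + ∑ i ∈ Finset.Ico 1 m₁, algebraMap F (AlgebraicClosure F) (c i) * α ^ i ∈
        (Fcal q (m / m₁) : Set (AlgebraicClosure F)) := by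
  classical
  obtain ⟨hα1, hα2⟩ := hα₀
  have hm₁2 : 2 ≤ m₁ := by
    rw [hm₁]; exact (Nat.minFac_prime (by omega)).two_le
  have hm₁dvd : m₁ ∣ m := hm₁ ▸ Nat.minFac_dvd m
  have hm0 : 0 < m := by omega
  -- integer characterization of the stabilizer of α₀
  have hmfix : (σ ^ ((m : ℕ) : ℤ)) α₀ = α₀ := by
    rw [zpow_natCast, pow_apply' q σ hσ]; exact hα1
  have hαchar : ∀ l : ℤ, (σ ^ l) α₀ = α₀ ↔ (m : ℤ) ∣ l := by
    obtain ⟨d₀, hd₀pos, hd₀char⟩ := exists_char σ α₀ ⟨m, hm0, hmfix⟩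
    have h1 : (d₀ : ℤ) ∣ (m : ℤ) := (hd₀char m).1 hmfix
    have h2 : m ∣ d₀ := by
      apply hα2 d₀ hd₀pos
      rw [← pow_apply' q σ hσ, ← zpow_natCast]
      exact (hd₀char d₀).2 dvd_rfl
    have : d₀ = m := Nat.dvd_antisymm (by exact_mod_cast h1) h2
    simpa [this] using hd₀char
  -- γ and its stabilizer
  set A := algebraMap F (AlgebraicClosure F) with hA
  set γ := Polynomial.aeval α₀ ψ with hγ
  have hcomm : ∀ (l : ℤ) (x : AlgebraicClosure F), (σ ^ l) (Polynomial.aeval x ψ) =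
      Polynomial.aeval ((σ ^ l) x) ψ := by
    intro l x
    exact (Polynomial.aeval_algHom_apply
      (σ ^ l : AlgebraicClosure F ≃ₐ[F] AlgebraicClosure F).toAlgHom x ψ).symm
  have hγm : (σ ^ ((m : ℕ) : ℤ)) γ = γ := by
    rw [hγ, hcomm, hmfix]
  have hγk : (σ ^ k) γ = γ := by rw [hγ, hcomm]; exact hfail
  obtain ⟨d, hdpos, hdchar⟩ := exists_char σ γ ⟨m, hm0, hγm⟩
  have hddvdm : d ∣ m := by exact_mod_cast (hdchar m).1 hγm
  have hddk : (d : ℤ) ∣ k := (hdchar k).1 hγk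
  have hmndk : ¬ ((m : ℤ) ∣ k) := fun h => hne ((hαchar k).2 h)
  have hmnd : ¬ (m ∣ d) := by
    intro h
    exact hmndk (dvd_trans (by exact_mod_cast h) hddk)
  obtain ⟨t, hmdt⟩ : ∃ t, m = d * t := hddvdm
  have ht0 : t ≠ 0 := by rintro rfl; omega
  have ht1 : 1 < t := by
    by_contra hle
    have h1 : t = 1 := by omega
    subst h1
    have h2 : m = d := by omega
    exact hmnd (h2 ▸ dvd_refl m)
  -- root counting
  have hψne : ψ ≠ 0 := by
    intro h; rw [h] at hdeg; simp at hdeg; omega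
  set p : Polynomial (AlgebraicClosure F) := ψ.map A - Polynomial.C γ with hp
  have hmapdeg : (ψ.map A).natDegree = m₁ := by
    rw [Polynomial.natDegree_map_eq_of_injective (algebraMap F (AlgebraicClosure F)).injective, hdeg]
  have hpdeg : p.natDegree = m₁ := by
    rw [hp, Polynomial.natDegree_sub_C, hmapdeg]
  have hpne : p ≠ 0 := by
    intro h; rw [h] at hpdeg; simp at hpdeg; omega
  have hroot : ∀ j : ℕ, ((σ ^ ((d * j : ℕ) : ℤ)) α₀) ∈ p.roots := by
    intro j
    rw [Polynomial.mem_roots hpne]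
    have hfix : (σ ^ ((d * j : ℕ) : ℤ)) γ = γ := (hdchar _).2 (by
      push_cast; exact Dvd.intro _ rfl)
    have heval : Polynomial.aeval ((σ ^ ((d * j : ℕ) : ℤ)) α₀) ψ = γ := by
      rw [← hcomm, ← hγ, hfix]
    simp only [Polynomial.IsRoot, hp, Polynomial.eval_sub, Polynomial.eval_C,
      Polynomial.eval_map]
    rw [← Polynomial.aeval_def, heval, sub_self]
  have hinj : Set.InjOn (fun j : ℕ => (σ ^ ((d * j : ℕ) : ℤ)) α₀)
      (Finset.range t) := by
    intro i hi j hj hij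
    simp only [Finset.coe_range, Set.mem_Iio] at hi hj
    simp only at hij
    have hdiff : (σ ^ (-(((d * j : ℕ) : ℤ)) + ((d * i : ℕ) : ℤ))) α₀ = α₀ := by
      rw [zpow_add, AlgEquiv.mul_apply, hij, ← AlgEquiv.mul_apply, ← zpow_add,
        neg_add_cancel]
      simp
    have hdvd : (m : ℤ) ∣ (-(((d * j : ℕ) : ℤ)) + ((d * i : ℕ) : ℤ)) :=
      (hαchar _).1 hdiff
    have heq : (-(((d * j : ℕ) : ℤ)) + ((d * i : ℕ) : ℤ))
        = (d : ℤ) * ((i : ℤ) - j) := by push_cast; ring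
    rw [heq] at hdvd
    have hcast : (m : ℤ) = (d : ℤ) * t := by exact_mod_cast hmdt
    rw [hcast] at hdvd
    have hdvd2 : (t : ℤ) ∣ ((i : ℤ) - j) :=
      (mul_dvd_mul_iff_left (by exact_mod_cast hdpos.ne' : (d : ℤ) ≠ 0)).1 hdvd
    have hzero := Int.eq_zero_of_abs_lt_dvd hdvd2 (by rw [abs_lt]; omega)
    omega
  have hcardle : t ≤ m₁ := by
    have h1 : (Finset.range t).card ≤ p.roots.toFinset.card := by
      apply Finset.card_le_card_of_injOn (fun j => (σ ^ ((d * j : ℕ) : ℤ)) α₀)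
      · intro j hj
        rw [Finset.mem_coe, Multiset.mem_toFinset]
        exact hroot j
      · exact hinj
    rw [Finset.card_range] at h1
    calc t ≤ p.roots.toFinset.card := h1
    _ ≤ Multiset.card p.roots := p.roots.toFinset_card_le
    _ ≤ p.natDegree := p.card_roots'
    _ = m₁ := hpdeg
  have htm : t ∣ m := ⟨d, by rw [hmdt, Nat.mul_comm]⟩
  have htge : m₁ ≤ t := hm₁ ▸ Nat.minFac_le_of_dvd ht1 htm
  have htm₁ : t = m₁ := le_antisymm hcardle htge
  have hdn : d = m / m₁ := by
    rw [← htm₁, hmdt, Nat.mul_div_cancel _ (by omega : 0 < t)]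
  -- the element δ
  set b := ψ.coeff m₁ with hb
  have hbne : b ≠ 0 := by
    rw [hb, ← hdeg]
    exact Polynomial.leadingCoeff_ne_zero.2 hψne
  have hAbne : A b ≠ 0 := fun h => hbne ((_root_.map_eq_zero A).1 h)
  set δ := (γ - A (ψ.coeff 0)) * (A b)⁻¹ with hδ
  -- stabilizer of δ equals stabilizer of γ
  have hδchar : ∀ l : ℤ, (σ ^ l) δ = δ ↔ (d : ℤ) ∣ l := by
    intro l
    have hc : ∀ x : F, (σ ^ l) (A x) = A x := fun x => (σ ^ l).commutes x
    have hexp : (σ ^ l) δ = ((σ ^ l) γ - A (ψ.coeff 0)) * (A b)⁻¹ := by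
      rw [hδ, map_mul, map_sub, hc, map_inv₀, hc]
    rw [hexp, ← hdchar l]
    constructor
    · intro h
      have h2 := mul_right_cancel₀ (inv_ne_zero hAbne) h
      exact sub_left_inj.1 h2
    · intro h; rw [h]
  -- conclusion
  refine ⟨α₀, ⟨hα1, hα2⟩, fun i => ψ.coeff i / b, ?_⟩
  have hsum : α₀ ^ m₁ + ∑ i ∈ Finset.Ico 1 m₁, A (ψ.coeff i / b) * α₀ ^ i = δ := by
    rw [eq_comm, hδ, mul_inv_eq_iff_eq_mul₀ hAbne]
    have hγsum : γ = ∑ i ∈ Finset.range (m₁ + 1), A (ψ.coeff i) * α₀ ^ i := by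
      rw [hγ, Polynomial.aeval_eq_sum_range' (by rw [hdeg]; omega : ψ.natDegree < m₁ + 1)]
      exact Finset.sum_congr rfl fun i _ => Algebra.smul_def _ _
    rw [hγsum, Finset.range_eq_Ico,
      Finset.sum_eq_sum_Ico_succ_bot (by omega : 0 < m₁ + 1)]
    rw [add_mul, Finset.sum_mul]
    have h1 : ∀ i ∈ Finset.Ico 1 m₁, A (ψ.coeff i / b) * α₀ ^ i * A b
        = A (ψ.coeff i) * α₀ ^ i := by
      intro i _
      rw [map_div₀]
      field_simp
    rw [Finset.sum_congr rfl h1]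
    rw [Finset.sum_Ico_succ_top (by omega : 1 ≤ m₁)]
    simp only [pow_zero, mul_one]
    ring
  rw [hsum]
  refine ⟨?_, ?_⟩
  · rw [← pow_apply' q σ hσ, ← zpow_natCast]
    exact (hδchar _).2 (by rw [← hdn])
  · intro l hl hfixl
    have hfz : (σ ^ ((l : ℕ) : ℤ)) δ = δ := by
      rw [zpow_natCast, pow_apply' q σ hσ]; exact hfixl
    have hdl : (d : ℤ) ∣ (l : ℤ) := (hδchar _).1 hfz
    have hdl' : d ∣ l := by exact_mod_cast hdl
    rwa [← hdn]
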